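/- The tropical Cartan characteristic function is independent of the reduced representation: if (g₀,…,gₙ) and (g̃₀,…,g̃ₙ) are two reduced representations of the same tropical holomorphic curve f : R → TP^n, then with F(x) = max_j g_j(x) and F̃(x) = max_j g̃_j(x), one has (F(r)+F(−r))/2 − F(0) = (F̃(r)+F̃(−r))/2 − F̃(0) for all r. -/

import Mathlib

open Set Filter

/-- A tropical meromorphic function: a continuous piecewise linear real function, i.e.
a continuous function that is affine on a one-sided neighbourhood of every point. -/
def TropMero (f : ℝ → ℝ) : Prop :=
  Continuous f ∧ ∀ x : ℝ, ∃ ε > (0 : ℝ),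
    (∃ a b : ℝ, ∀ y ∈ Set.Ico x (x + ε), f y = a * y + b) ∧
    (∃ a b : ℝ, ∀ y ∈ Set.Ioc (x - ε) x, f y = a * y + b)

/-- `ω_f(x)`: the jump of the derivative of `f` at `x` (right slope minus left slope).
`x` is a root of `f` if `ω_f(x) > 0` and a pole if `ω_f(x) < 0`. -/
noncomputable def omega (f : ℝ → ℝ) (x : ℝ) : ℝ :=
  derivWithin f (Set.Ici x) x - derivWithin f (Set.Iic x) x

/-- A tropical entire function: a tropical meromorphic function without poles,
equivalently a convex one. -/
def TropEntire (f : ℝ → ℝ) : Prop := TropMero f ∧ ConvexOn ℝ Set.univ f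

/-- The tropical proximity function `m(r, f) = (f⁺(r) + f⁺(-r))/2`. -/
noncomputable def mProx (f : ℝ → ℝ) (r : ℝ) : ℝ := (max (f r) 0 + max (f (-r)) 0) / 2

/-- The unintegrated counting function `n(t, f) = Σ_{|s| ≤ t, ω_f(s) < 0} |ω_f(s)|`. -/
noncomputable def nCount (f : ℝ → ℝ) (t : ℝ) : ℝ :=
  ∑ᶠ s ∈ {s : ℝ | |s| ≤ t ∧ omega f s < 0}, |omega f s|

/-- The tropical counting function `N(r, f) = (1/2) ∫₀^r n(t, f) dt`. -/
noncomputable def NCount (f : ℝ → ℝ) (r : ℝ) : ℝ := (1 / 2) * ∫ t in (0 : ℝ)..r, nCount f t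

/-- The tropical Nevanlinna characteristic `T(r, f) = m(r, f) + N(r, f)`. -/
noncomputable def Tchar (f : ℝ → ℝ) (r : ℝ) : ℝ := mProx f r + NCount f r

/-- A reduced representation of a tropical holomorphic curve: a tuple of tropical entire
functions with no root common to all of them. -/
def ReducedRepresentation (n : ℕ) (g : Fin (n + 1) → ℝ → ℝ) : Prop :=
  (∀ j, TropEntire (g j)) ∧ ¬ ∃ x : ℝ, ∀ j, 0 < omega (g j) x

open Topology

lemma derivWithin_right_aux {f : ℝ → ℝ} {x ε a b : ℝ} (hε : 0 < ε)
    (h : ∀ y ∈ Set.Ico x (x + ε), f y = a * y + b) :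
    derivWithin f (Set.Ici x) x = a := by
  have hmem : Set.Ico x (x + ε) ∈ 𝓝[Set.Ici x] x := by
    rw [← Set.Ici_inter_Iio]
    exact inter_mem_nhdsWithin _ (Iio_mem_nhds (by linarith))
  have haff : HasDerivAt (fun y => a * y + b) a x := by
    simpa using ((hasDerivAt_id x).const_mul a).add_const b
  have h2 : HasDerivWithinAt f a (Set.Ici x) x :=
    (haff.hasDerivWithinAt).congr_of_eventuallyEq
      (Filter.eventuallyEq_of_mem hmem fun y hy => h y hy)
      (h x ⟨le_refl x, by linarith⟩)
  exact h2.derivWithin (uniqueDiffOn_Ici x x (Set.mem_Ici.mpr le_rfl))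

lemma derivWithin_left_aux {f : ℝ → ℝ} {x ε a b : ℝ} (hε : 0 < ε)
    (h : ∀ y ∈ Set.Ioc (x - ε) x, f y = a * y + b) :
    derivWithin f (Set.Iic x) x = a := by
  have hmem : Set.Ioc (x - ε) x ∈ 𝓝[Set.Iic x] x := by
    have : Set.Ioc (x - ε) x = Set.Iic x ∩ Set.Ioi (x - ε) := by
      ext y; simp [Set.mem_Ioc, and_comm]
    rw [this]
    exact inter_mem_nhdsWithin _ (Ioi_mem_nhds (by linarith))
  have haff : HasDerivAt (fun y => a * y + b) a x := by
    simpa using ((hasDerivAt_id x).const_mul a).add_const b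
  have h2 : HasDerivWithinAt f a (Set.Iic x) x :=
    (haff.hasDerivWithinAt).congr_of_eventuallyEq
      (Filter.eventuallyEq_of_mem hmem fun y hy => h y hy)
      (h x ⟨by linarith, le_refl x⟩)
  exact h2.derivWithin (uniqueDiffOn_Iic x x (Set.mem_Iic.mpr le_rfl))

lemma slope_le_aux {f : ℝ → ℝ} (hf : ConvexOn ℝ Set.univ f) {x ε a b a' b' : ℝ} (hε : 0 < ε)
    (hr : ∀ y ∈ Set.Ico x (x + ε), f y = a * y + b)
    (hl : ∀ y ∈ Set.Ioc (x - ε) x, f y = a' * y + b') : a' ≤ a := by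
  have h1 : f (x + ε / 2) = a * (x + ε / 2) + b := hr _ ⟨by linarith, by linarith⟩
  have h2 : f (x - ε / 2) = a' * (x - ε / 2) + b' := hl _ ⟨by linarith, by linarith⟩
  have h3 : f x = a * x + b := hr _ ⟨le_refl x, by linarith⟩
  have h4 : f x = a' * x + b' := hl _ ⟨by linarith, le_refl x⟩
  have hcv := hf.2 (Set.mem_univ (x - ε / 2)) (Set.mem_univ (x + ε / 2))
    (by norm_num : (0:ℝ) ≤ 1/2) (by norm_num : (0:ℝ) ≤ 1/2) (by norm_num)
  rw [smul_eq_mul, smul_eq_mul, smul_eq_mul, smul_eq_mul,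
    show (1/2 : ℝ) * (x - ε / 2) + (1/2 : ℝ) * (x + ε / 2) = x by ring] at hcv
  nlinarith [hε]

lemma entire_affine_aux {f : ℝ → ℝ} (hf : TropEntire f) {x : ℝ}
    (hx : omega f x ≤ 0) :
    ∃ ε > (0:ℝ), ∃ a b : ℝ, ∀ y ∈ Set.Ioo (x - ε) (x + ε), f y = a * y + b := by
  obtain ⟨ε, hε, ⟨a, b, hr⟩, ⟨a', b', hl⟩⟩ := hf.1.2 x
  have hd1 : derivWithin f (Set.Ici x) x = a := derivWithin_right_aux hε hr
  have hd2 : derivWithin f (Set.Iic x) x = a' := derivWithin_left_aux hε hl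
  have hle : a' ≤ a := slope_le_aux hf.2 hε hr hl
  have haa : a = a' := by unfold omega at hx; rw [hd1, hd2] at hx; linarith
  have hbb : b = b' := by
    have h3 : f x = a * x + b := hr _ ⟨le_refl x, by linarith⟩
    have h4 : f x = a' * x + b' := hl _ ⟨by linarith, le_refl x⟩
    rw [haa] at h3; linarith
  refine ⟨ε, hε, a, b, fun y hy => ?_⟩
  rcases le_or_gt x y with h | h
  · exact hr y ⟨h, hy.2⟩
  · rw [haa, hbb]; exact hl y ⟨hy.1, le_of_lt h⟩


/-- The tropical Cartan characteristic function is independent of the reduced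
representation: if `(g₀,…,gₙ)` and `(g̃₀,…,g̃ₙ)` are two reduced representations of the
same tropical holomorphic curve (for each `x` there is `λ(x)` with
`g̃_j(x) = g_j(x) + λ(x)` for all `j`), then with `F = max_j g_j`, `F̃ = max_j g̃_j`,
one has `(F(r)+F(−r))/2 − F(0) = (F̃(r)+F̃(−r))/2 − F̃(0)` for all `r`. -/
theorem cartan_characteristic_well_defined (n : ℕ) (g gt : Fin (n + 1) → ℝ → ℝ)
    (hg : ReducedRepresentation n g) (hgt : ReducedRepresentation n gt)
    (hsame : ∀ x : ℝ, ∃ lam : ℝ, ∀ j, gt j x = g j x + lam) :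
    ∀ r : ℝ,
      ((Finset.univ.sup' Finset.univ_nonempty fun j => g j r) +
          (Finset.univ.sup' Finset.univ_nonempty fun j => g j (-r))) / 2 -
        (Finset.univ.sup' Finset.univ_nonempty fun j => g j 0) =
      ((Finset.univ.sup' Finset.univ_nonempty fun j => gt j r) +
          (Finset.univ.sup' Finset.univ_nonempty fun j => gt j (-r))) / 2 -
        (Finset.univ.sup' Finset.univ_nonempty fun j => gt j 0) := by
  intro r
  set lam : ℝ → ℝ := fun y => gt 0 y - g 0 y with hlamdef
  have hL : ∀ y j, gt j y = g j y + lam y := by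
    intro y j
    obtain ⟨l, hl⟩ := hsame y
    have hly : lam y = l := by simp [hlamdef, hl 0]
    rw [hly, hl j]
  -- λ is locally affine
  have loc : ∀ x : ℝ, ∃ ε > (0:ℝ), ∃ a b : ℝ,
      ∀ y ∈ Set.Ioo (x - ε) (x + ε), lam y = a * y + b := by
    intro x
    have hg2 := hg.2
    have hgt2 := hgt.2
    push_neg at hg2 hgt2
    obtain ⟨j, hj⟩ := hg2 x
    obtain ⟨k, hk⟩ := hgt2 x
    obtain ⟨εj, hεj, p, pb, hp⟩ := entire_affine_aux (hg.1 j) hj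
    obtain ⟨εk, hεk, q, qb, hq⟩ := entire_affine_aux (hgt.1 k) hk
    obtain ⟨ε1, hε1, ⟨aR, bR, hAR⟩, ⟨aL, bL, hAL⟩⟩ := (hgt.1 j).1.2 x
    obtain ⟨ε2, hε2, ⟨cR, dR, hCR⟩, ⟨cL, dL, hCL⟩⟩ := (hg.1 k).1.2 x
    have hAA : aL ≤ aR := slope_le_aux (hgt.1 j).2 hε1 hAR hAL
    have hCC : cL ≤ cR := slope_le_aux (hg.1 k).2 hε2 hCR hCL
    set ε := min (min εj εk) (min ε1 ε2) with hεdef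
    have hε : 0 < ε := lt_min (lt_min hεj hεk) (lt_min hε1 hε2)
    have hej : ε ≤ εj := le_trans (min_le_left _ _) (min_le_left _ _)
    have hek : ε ≤ εk := le_trans (min_le_left _ _) (min_le_right _ _)
    have he1 : ε ≤ ε1 := le_trans (min_le_right _ _) (min_le_left _ _)
    have he2 : ε ≤ ε2 := le_trans (min_le_right _ _) (min_le_right _ _)
    have hR : ∀ y ∈ Set.Ico x (x + ε),
        lam y = (aR - p) * y + (bR - pb) ∧ lam y = (q - cR) * y + (qb - dR) := by
      intro y hy
      have e1 : gt j y = aR * y + bR := hAR y ⟨hy.1, by linarith [hy.2]⟩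
      have e2 : g j y = p * y + pb := hp y ⟨by linarith [hy.1], by linarith [hy.2]⟩
      have e3 : gt k y = q * y + qb := hq y ⟨by linarith [hy.1], by linarith [hy.2]⟩
      have e4 : g k y = cR * y + dR := hCR y ⟨hy.1, by linarith [hy.2]⟩
      have e0j : lam y = gt j y - g j y := by linarith [hL y j]
      have e0k : lam y = gt k y - g k y := by linarith [hL y k]
      constructor
      · rw [e0j, e1, e2]; ring
      · rw [e0k, e3, e4]; ring
    have hLe : ∀ y ∈ Set.Ioc (x - ε) x,
        lam y = (aL - p) * y + (bL - pb) ∧ lam y = (q - cL) * y + (qb - dL) := by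
      intro y hy
      have e1 : gt j y = aL * y + bL := hAL y ⟨by linarith [hy.1], hy.2⟩
      have e2 : g j y = p * y + pb := hp y ⟨by linarith [hy.1], by linarith [hy.2]⟩
      have e3 : gt k y = q * y + qb := hq y ⟨by linarith [hy.1], by linarith [hy.2]⟩
      have e4 : g k y = cL * y + dL := hCL y ⟨by linarith [hy.1], hy.2⟩
      have e0j : lam y = gt j y - g j y := by linarith [hL y j]
      have e0k : lam y = gt k y - g k y := by linarith [hL y k]
      constructor
      · rw [e0j, e1, e2]; ring
      · rw [e0k, e3, e4]; ring
    -- slopes compare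
    obtain ⟨r1, r2⟩ := hR x ⟨le_refl x, by linarith⟩
    obtain ⟨r3, r4⟩ := hR (x + ε/2) ⟨by linarith, by linarith⟩
    obtain ⟨l1, l2⟩ := hLe x ⟨by linarith, le_refl x⟩
    obtain ⟨l3, l4⟩ := hLe (x - ε/2) ⟨by linarith, by linarith⟩
    have hsR : (aR - p) * (ε/2) = (q - cR) * (ε/2) := by linear_combination r4 - r3 - r2 + r1
    have hsL : (aL - p) * (ε/2) = (q - cL) * (ε/2) := by linear_combination l2 - l1 - l4 + l3
    have hne : (ε/2 : ℝ) ≠ 0 := by positivity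
    have hRs : aR - p = q - cR := mul_right_cancel₀ hne hsR
    have hLs : aL - p = q - cL := mul_right_cancel₀ hne hsL
    have haeq : aL = aR := by linarith
    have hbeq : bL = bR := by
      have : (aR - p) * x + (bR - pb) = (aL - p) * x + (bL - pb) := r1.symm.trans l1
      rw [haeq] at this; linarith
    refine ⟨ε, hε, aR - p, bR - pb, fun y hy => ?_⟩
    rcases le_or_gt x y with h | h
    · exact (hR y ⟨h, hy.2⟩).1
    · have := (hLe y ⟨hy.1, le_of_lt h⟩).1
      rw [haeq, hbeq] at this; exact this
  -- λ is globally affine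
  have hder : ∀ x : ℝ, ∃ ε > (0:ℝ), ∃ a : ℝ,
      ∀ y ∈ Set.Ioo (x - ε) (x + ε), HasDerivAt lam a y := by
    intro x
    obtain ⟨ε, hε, a, b, hab⟩ := loc x
    refine ⟨ε, hε, a, fun y hy => ?_⟩
    have haff : HasDerivAt (fun z => a * z + b) a y := by
      simpa using ((hasDerivAt_id y).const_mul a).add_const b
    exact haff.congr_of_eventuallyEq
      (Filter.eventuallyEq_of_mem (isOpen_Ioo.mem_nhds hy) fun z hz => hab z hz)
  have hdiff : Differentiable ℝ lam := by
    intro x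
    obtain ⟨ε, hε, a, ha⟩ := hder x
    exact (ha x ⟨by linarith, by linarith⟩).differentiableAt
  have hlc : IsLocallyConstant (deriv lam) := by
    rw [IsLocallyConstant.iff_exists_open]
    intro x
    obtain ⟨ε, hε, a, ha⟩ := hder x
    refine ⟨Set.Ioo (x - ε) (x + ε), isOpen_Ioo, ⟨by linarith, by linarith⟩, fun y hy => ?_⟩
    rw [(ha y hy).deriv, (ha x ⟨by linarith, by linarith⟩).deriv]
  have hc : ∀ y : ℝ, deriv lam y = deriv lam 0 := fun y =>
    hlc.apply_eq_of_preconnectedSpace y 0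
  set c := deriv lam 0 with hcdef
  have hF0 : ∀ y : ℝ, HasDerivAt (fun z => lam z - c * z) 0 y := by
    intro y
    have h1 : HasDerivAt lam c y := by
      have := (hdiff y).hasDerivAt
      rwa [hc y] at this
    have h2 : HasDerivAt (fun z => c * z) c y := by
      simpa using (hasDerivAt_id y).const_mul c
    have h3 : HasDerivAt (fun z => lam z - c * z) (c - c) y := h1.sub h2
    rwa [sub_self] at h3
  have hlin : ∀ y : ℝ, lam y = c * y + lam 0 := by
    intro y
    have := is_const_of_deriv_eq_zero (f := fun z => lam z - c * z)
      (fun z => (hF0 z).differentiableAt) (fun z => (hF0 z).deriv) y 0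
    simp at this
    linarith
  -- sup' shift
  have key : ∀ y : ℝ, (Finset.univ.sup' Finset.univ_nonempty fun j => gt j y) =
      (Finset.univ.sup' Finset.univ_nonempty fun j => g j y) + lam y := by
    intro y
    have hcomp := Finset.comp_sup'_eq_sup'_comp (f := fun j : Fin (n+1) => g j y)
      Finset.univ_nonempty (fun z => z + lam y) (fun u v => (max_add_add_right u v (lam y)).symm)
    rw [show (fun j : Fin (n+1) => gt j y) = ((fun z => z + lam y) ∘ fun j => g j y) from
      funext fun j => hL y j]
    exact hcomp.symm
  rw [key r, key (-r), key 0, hlin r, hlin (-r), hlin 0]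
  ring
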